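/- Fix m ∈ (0,1]. There exists a constant β > 0 (depending on A, a, Γ, and m) such that for every u ∈ ℝ^n with u > 0 entrywise, ‖u‖ = 1, and min_i u_i ≥ m, setting λ = λ(u) and letting (Δ, δ) solve the Newton system at (u,λ), one has β·‖Δ‖ ≤ δ. -/

import Mathlib

open Matrix Finset

noncomputable def enorm' {n : ℕ} (u : Fin n → ℝ) : ℝ := Real.sqrt (∑ i, u i ^ 2)

def IsZMatrix {n : ℕ} (B : Matrix (Fin n) (Fin n) ℝ) : Prop :=
  ∀ i j, i ≠ j → B i j ≤ 0

def IsIrreducibleMat {n : ℕ} (B : Matrix (Fin n) (Fin n) ℝ) : Prop :=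
  ¬ ∃ S : Finset (Fin n), S.Nonempty ∧ S ≠ Finset.univ ∧
    ∀ i ∈ S, ∀ j ∉ S, B i j = 0

def IsNonsingularM {n : ℕ} (B : Matrix (Fin n) (Fin n) ℝ) : Prop :=
  IsZMatrix B ∧ IsUnit B ∧ ∀ i j, 0 ≤ B⁻¹ i j

noncomputable def calA {n : ℕ} (A : Matrix (Fin n) (Fin n) ℝ) (Γ : ℝ) (a : Fin n → ℝ)
    (u : Fin n → ℝ) : Matrix (Fin n) (Fin n) ℝ :=
  A + Γ • Matrix.diagonal (fun i => 1 - 1 / (a i + u i ^ 2))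

noncomputable def rvec {n : ℕ} (A : Matrix (Fin n) (Fin n) ℝ) (Γ : ℝ) (a : Fin n → ℝ)
    (u : Fin n → ℝ) (lam : ℝ) : Fin n → ℝ :=
  calA A Γ a u *ᵥ u - lam • u

noncomputable def Jmat {n : ℕ} (A : Matrix (Fin n) (Fin n) ℝ) (Γ : ℝ) (a : Fin n → ℝ)
    (u : Fin n → ℝ) (lam : ℝ) : Matrix (Fin n) (Fin n) ℝ :=
  A + (Γ - lam) • (1 : Matrix (Fin n) (Fin n) ℝ)
    - Γ • Matrix.diagonal (fun i => (a i - u i ^ 2) / (a i + u i ^ 2) ^ 2)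

noncomputable def lamOf {n : ℕ} [NeZero n] (A : Matrix (Fin n) (Fin n) ℝ) (Γ : ℝ)
    (a : Fin n → ℝ) (u : Fin n → ℝ) : ℝ :=
  ⨅ i, (calA A Γ a u *ᵥ u) i / u i

def NewtonSystem {n : ℕ} (A : Matrix (Fin n) (Fin n) ℝ) (Γ : ℝ) (a : Fin n → ℝ)
    (u : Fin n → ℝ) (lam : ℝ) (Δ : Fin n → ℝ) (δ : ℝ) : Prop :=
  Jmat A Γ a u lam *ᵥ Δ - δ • u = -rvec A Γ a u lam ∧
  -(u ⬝ᵥ Δ) = -(1/2 * (u ⬝ᵥ u - 1))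

section Helpers

variable {n : ℕ}

lemma zmat_mulVec_nonneg (B : Matrix (Fin n) (Fin n) ℝ)
    (hB : ∀ i j, i ≠ j → B i j ≤ 0)
    (v : Fin n → ℝ) (hv : ∀ i, 0 < v i) (hBv : ∀ i, 0 < (B *ᵥ v) i)
    (x : Fin n → ℝ) (hx : ∀ i, 0 ≤ (B *ᵥ x) i) : ∀ i, 0 ≤ x i := by
  intro i
  have hne : (Finset.univ : Finset (Fin n)).Nonempty := ⟨i, Finset.mem_univ i⟩
  obtain ⟨i0, -, hi0⟩ := Finset.exists_min_image Finset.univ (fun j => x j / v j) hne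
  set t := x i0 / v i0 with ht
  have htv : ∀ j, t * v j ≤ x j := by
    intro j
    have h1 : t ≤ x j / v j := hi0 j (Finset.mem_univ j)
    calc t * v j ≤ (x j / v j) * v j :=
          mul_le_mul_of_nonneg_right h1 (hv j).le
      _ = x j := div_mul_cancel₀ _ (hv j).ne'
  have hkey : (B *ᵥ x) i0 ≤ t * (B *ᵥ v) i0 := by
    have hterm : ∀ j, B i0 j * x j ≤ B i0 j * (t * v j) := by
      intro j
      rcases eq_or_ne j i0 with rfl | hji
      · have hxj : t * v j = x j := div_mul_cancel₀ _ (hv j).ne'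
        rw [hxj]
      · exact mul_le_mul_of_nonpos_left (htv j) (hB i0 j (Ne.symm hji))
    have h2 : (B *ᵥ x) i0 = ∑ j, B i0 j * x j := by
      simp [Matrix.mulVec, dotProduct]
    have h3 : t * (B *ᵥ v) i0 = ∑ j, B i0 j * (t * v j) := by
      simp only [Matrix.mulVec, dotProduct, Finset.mul_sum]
      exact Finset.sum_congr rfl fun j _ => by ring
    rw [h2, h3]
    exact Finset.sum_le_sum fun j _ => hterm j
  have ht0 : 0 ≤ t := by
    have h0 : 0 ≤ t * (B *ᵥ v) i0 := le_trans (hx i0) hkey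
    by_contra hcon
    push_neg at hcon
    nlinarith [hBv i0]
  have h4 : 0 ≤ x i / v i := le_trans ht0 (hi0 i (Finset.mem_univ i))
  have := (div_nonneg_iff.mp h4)
  rcases this with ⟨h, _⟩ | ⟨_, h2⟩
  · exact h
  · linarith [hv i]

lemma zmat_mulVec_inj (B : Matrix (Fin n) (Fin n) ℝ)
    (hB : ∀ i j, i ≠ j → B i j ≤ 0)
    (v : Fin n → ℝ) (hv : ∀ i, 0 < v i) (hBv : ∀ i, 0 < (B *ᵥ v) i)
    (x : Fin n → ℝ) (hx : B *ᵥ x = 0) : x = 0 := by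
  have h1 : ∀ i, 0 ≤ x i :=
    zmat_mulVec_nonneg B hB v hv hBv x (by rw [hx]; intro i; simp)
  have h2 : ∀ i, 0 ≤ (-x) i :=
    zmat_mulVec_nonneg B hB v hv hBv (-x) (by rw [Matrix.mulVec_neg, hx]; intro i; simp)
  funext i
  have := h2 i
  simp only [Pi.neg_apply, Left.nonneg_neg_iff] at this
  exact le_antisymm this (h1 i)

lemma zmat_det_ne_zero (B : Matrix (Fin n) (Fin n) ℝ)
    (hB : ∀ i j, i ≠ j → B i j ≤ 0)
    (v : Fin n → ℝ) (hv : ∀ i, 0 < v i) (hBv : ∀ i, 0 < (B *ᵥ v) i) :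
    B.det ≠ 0 := by
  intro h
  obtain ⟨w, hw0, hw⟩ := Matrix.exists_mulVec_eq_zero_iff.mpr h
  exact hw0 (zmat_mulVec_inj B hB v hv hBv w hw)

lemma enorm_nonneg' (u : Fin n → ℝ) : 0 ≤ enorm' u := Real.sqrt_nonneg _

lemma dot_le_enorm (x y : Fin n → ℝ) : (∑ i, x i * y i) ≤ enorm' x * enorm' y := by
  have h1 : (∑ i, x i * y i) ^ 2 ≤ (∑ i, x i ^ 2) * (∑ i, y i ^ 2) :=
    Finset.sum_mul_sq_le_sq_mul_sq Finset.univ x y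
  calc (∑ i, x i * y i) ≤ |∑ i, x i * y i| := le_abs_self _
    _ = Real.sqrt ((∑ i, x i * y i) ^ 2) := (Real.sqrt_sq_eq_abs _).symm
    _ ≤ Real.sqrt ((∑ i, x i ^ 2) * (∑ i, y i ^ 2)) := Real.sqrt_le_sqrt h1
    _ = enorm' x * enorm' y := Real.sqrt_mul (by positivity) _

lemma enorm_triangle (x y : Fin n → ℝ) : enorm' (x + y) ≤ enorm' x + enorm' y := by
  unfold enorm'
  have h1 : ∑ i, (x + y) i ^ 2 ≤ (enorm' x + enorm' y) ^ 2 := by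
    have hd : (∑ i, x i * y i) ≤ enorm' x * enorm' y := dot_le_enorm x y
    have hx : Real.sqrt (∑ i, x i ^ 2) ^ 2 = ∑ i, x i ^ 2 := Real.sq_sqrt (by positivity)
    have hy : Real.sqrt (∑ i, y i ^ 2) ^ 2 = ∑ i, y i ^ 2 := Real.sq_sqrt (by positivity)
    have hexp : ∑ i, (x + y) i ^ 2 = (∑ i, x i ^ 2) + 2 * (∑ i, x i * y i) + ∑ i, y i ^ 2 := by
      rw [Finset.mul_sum, ← Finset.sum_add_distrib, ← Finset.sum_add_distrib]
      exact Finset.sum_congr rfl fun i _ => by simp only [Pi.add_apply]; ring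
    rw [hexp]
    unfold enorm' at hd ⊢
    nlinarith [Real.sqrt_nonneg (∑ i, x i ^ 2), Real.sqrt_nonneg (∑ i, y i ^ 2)]
  calc Real.sqrt (∑ i, (x + y) i ^ 2) ≤ Real.sqrt ((enorm' x + enorm' y) ^ 2) :=
        Real.sqrt_le_sqrt h1
    _ = enorm' x + enorm' y := by
        rw [Real.sqrt_sq (by unfold enorm'; positivity)]

lemma enorm_smul' (c : ℝ) (x : Fin n → ℝ) : enorm' (c • x) = |c| * enorm' x := by
  unfold enorm'
  have : ∑ i, (c • x) i ^ 2 = c ^ 2 * ∑ i, x i ^ 2 := by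
    simp [Finset.mul_sum, mul_pow]
  rw [this, Real.sqrt_mul (by positivity), Real.sqrt_sq_eq_abs]

lemma enorm_neg' (x : Fin n → ℝ) : enorm' (-x) = enorm' x := by
  unfold enorm'; simp

lemma enorm_mono (x y : Fin n → ℝ) (hx : ∀ i, 0 ≤ x i) (hxy : ∀ i, x i ≤ y i) :
    enorm' x ≤ enorm' y := by
  unfold enorm'
  apply Real.sqrt_le_sqrt
  exact Finset.sum_le_sum fun i _ => pow_le_pow_left₀ (hx i) (hxy i) 2

lemma enorm_le_sum (x : Fin n → ℝ) (hx : ∀ i, 0 ≤ x i) : enorm' x ≤ ∑ i, x i := by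
  unfold enorm'
  have h1 : ∑ i, x i ^ 2 ≤ (∑ i, x i) ^ 2 := by
    have : ∀ i ∈ Finset.univ, x i ^ 2 ≤ x i * ∑ j, x j := by
      intro i _
      rw [sq]
      exact mul_le_mul_of_nonneg_left
        (Finset.single_le_sum (fun j _ => hx j) (Finset.mem_univ i)) (hx i)
    calc ∑ i, x i ^ 2 ≤ ∑ i, x i * ∑ j, x j := Finset.sum_le_sum this
      _ = (∑ i, x i) ^ 2 := by rw [← Finset.sum_mul, sq]
  calc Real.sqrt (∑ i, x i ^ 2) ≤ Real.sqrt ((∑ i, x i) ^ 2) := Real.sqrt_le_sqrt h1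
    _ = ∑ i, x i := Real.sqrt_sq (Finset.sum_nonneg fun i _ => hx i)

end Helpers

theorem stmt_15 {n : ℕ} [NeZero n] (A : Matrix (Fin n) (Fin n) ℝ) (a : Fin n → ℝ) (Γ : ℝ)
    (ha : ∀ i, 0 < a i) (hΓ : 0 < Γ)
    (hA : IsNonsingularM A) (hAirr : IsIrreducibleMat A)
    (m : ℝ) (hm0 : 0 < m) (hm1 : m ≤ 1) :
    ∃ β : ℝ, 0 < β ∧
      ∀ (u : Fin n → ℝ), (∀ i, 0 < u i) → enorm' u = 1 → (∀ i, m ≤ u i) →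
        ∀ (Δ : Fin n → ℝ) (δ : ℝ),
          NewtonSystem A Γ a u (lamOf A Γ a u) Δ δ →
          β * enorm' Δ ≤ δ := by
  classical
  obtain ⟨hAZ, hAu, hAinv⟩ := hA
  have hne : (Finset.univ : Finset (Fin n)).Nonempty := Finset.univ_nonempty
  set aM := Finset.univ.sup' hne a with haMdef
  have haM1 : ∀ i, a i ≤ aM := fun i => Finset.le_sup' a (Finset.mem_univ i)
  have haMpos : 0 < aM := lt_of_lt_of_le (ha (Classical.arbitrary _)) (haM1 _)
  set c := 2 * Γ * m ^ 2 / (aM + 1) ^ 2 with hcdef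
  have hcpos : 0 < c := by positivity
  refine ⟨c * m / (m + 1), by positivity, ?_⟩
  intro u hu hnorm hum Δ δ hNS
  obtain ⟨hN1, hN2⟩ := hNS
  set lam := lamOf A Γ a u with hlamdef
  set J := Jmat A Γ a u lam with hJdef
  set r := rvec A Γ a u lam with hrdef
  have hsum : ∑ i, u i ^ 2 = 1 := Real.sqrt_eq_one.mp hnorm
  have hu1 : ∀ i, u i ≤ 1 := by
    intro i
    have h1 : u i ^ 2 ≤ 1 := by
      rw [← hsum]
      exact Finset.single_le_sum (f := fun j => u j ^ 2)
        (fun j _ => sq_nonneg _) (Finset.mem_univ i)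
    nlinarith [hu i]
  have hp : ∀ i, 0 < a i + u i ^ 2 := fun i => add_pos (ha i) (pow_pos (hu i) 2)
  have hr0 : ∀ i, 0 ≤ r i := by
    intro i
    have hle : lam ≤ (calA A Γ a u *ᵥ u) i / u i := by
      rw [hlamdef, lamOf]
      exact ciInf_le (Finite.bddBelow_range _) i
    have h2 : lam * u i ≤ (calA A Γ a u *ᵥ u) i := (le_div_iff₀ (hu i)).mp hle
    simp only [hrdef, rvec, Pi.sub_apply, Pi.smul_apply, smul_eq_mul]
    linarith
  have hJapply : ∀ x : Fin n → ℝ, ∀ i, (J *ᵥ x) i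
      = (A *ᵥ x) i + (Γ - lam) * x i
        - Γ * ((a i - u i ^ 2) / (a i + u i ^ 2) ^ 2 * x i) := by
    intro x i
    rw [hJdef, Jmat, Matrix.sub_mulVec, Matrix.add_mulVec, Matrix.smul_mulVec,
      Matrix.smul_mulVec, Matrix.one_mulVec]
    simp [Matrix.mulVec_diagonal]
  have hcalA : ∀ i, (calA A Γ a u *ᵥ u) i
      = (A *ᵥ u) i + Γ * ((1 - 1 / (a i + u i ^ 2)) * u i) := by
    intro i
    rw [calA, Matrix.add_mulVec, Matrix.smul_mulVec]
    simp [Matrix.mulVec_diagonal]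
  have hJu : ∀ i, c * u i ≤ (J *ᵥ u) i := by
    intro i
    have hJui : (J *ᵥ u) i = r i + Γ * (2 * u i ^ 2 / (a i + u i ^ 2) ^ 2) * u i := by
      rw [hJapply u i, hrdef, rvec]
      simp only [Pi.sub_apply, Pi.smul_apply, smul_eq_mul]
      rw [hcalA i]
      field_simp [(hp i).ne']
      ring
    have hc2 : c ≤ Γ * (2 * u i ^ 2 / (a i + u i ^ 2) ^ 2) := by
      have h2 : m ^ 2 ≤ u i ^ 2 := by nlinarith [hum i, hm0]
      have hb : a i + u i ^ 2 ≤ aM + 1 := by nlinarith [haM1 i, hu1 i, hu i]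
      have hD : (a i + u i ^ 2) ^ 2 ≤ (aM + 1) ^ 2 :=
        pow_le_pow_left₀ (hp i).le hb 2
      have hN : 2 * Γ * m ^ 2 ≤ Γ * (2 * u i ^ 2) := by
        nlinarith [mul_le_mul_of_nonneg_left h2 hΓ.le]
      rw [hcdef, ← mul_div_assoc]
      exact div_le_div₀ (mul_nonneg hΓ.le (by positivity)) hN (pow_pos (hp i) 2) hD
    have : c * u i ≤ Γ * (2 * u i ^ 2 / (a i + u i ^ 2) ^ 2) * u i :=
      mul_le_mul_of_nonneg_right hc2 (hu i).le
    linarith [hr0 i]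
  have hJupos : ∀ i, 0 < (J *ᵥ u) i :=
    fun i => lt_of_lt_of_le (mul_pos hcpos (hu i)) (hJu i)
  have hJZ : ∀ i j, i ≠ j → J i j ≤ 0 := by
    intro i j hij
    have hA0 := hAZ i j hij
    rw [hJdef, Jmat]
    simp only [Matrix.sub_apply, Matrix.add_apply, Matrix.smul_apply,
      Matrix.one_apply_ne hij, Matrix.diagonal_apply_ne _ hij, smul_eq_mul, mul_zero,
      sub_zero, add_zero]
    linarith
  have hdet : J.det ≠ 0 := zmat_det_ne_zero J hJZ u hu hJupos
  have hdet' : IsUnit J.det := isUnit_iff_ne_zero.mpr hdet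
  set z := J⁻¹ *ᵥ u with hzdef
  set y := J⁻¹ *ᵥ r with hydef
  have hJz : J *ᵥ z = u := by
    rw [hzdef, Matrix.mulVec_mulVec, Matrix.mul_nonsing_inv J hdet', Matrix.one_mulVec]
  have hJy : J *ᵥ y = r := by
    rw [hydef, Matrix.mulVec_mulVec, Matrix.mul_nonsing_inv J hdet', Matrix.one_mulVec]
  have hz0 : ∀ i, 0 ≤ z i :=
    zmat_mulVec_nonneg J hJZ u hu hJupos z (by rw [hJz]; exact fun i => (hu i).le)
  have hy0 : ∀ i, 0 ≤ y i :=
    zmat_mulVec_nonneg J hJZ u hu hJupos y (by rw [hJy]; exact hr0)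
  have hzc : ∀ i, z i ≤ c⁻¹ * u i := by
    have hnn : ∀ i, 0 ≤ (J *ᵥ (c⁻¹ • u - z)) i := by
      intro i
      rw [Matrix.mulVec_sub, Matrix.mulVec_smul]
      simp only [Pi.sub_apply, Pi.smul_apply, smul_eq_mul]
      rw [hJz]
      have := hJu i
      have h3 : u i ≤ c⁻¹ * (J *ᵥ u) i := by
        rw [le_inv_mul_iff₀ hcpos]
        linarith
      linarith
    have := zmat_mulVec_nonneg J hJZ u hu hJupos _ hnn
    intro i
    have h4 := this i
    simp only [Pi.sub_apply, Pi.smul_apply, smul_eq_mul] at h4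
    linarith
  have henz : enorm' z ≤ c⁻¹ := by
    calc enorm' z ≤ enorm' (c⁻¹ • u) := enorm_mono z _ hz0 (fun i => by
          simpa using hzc i)
      _ = |c⁻¹| * enorm' u := enorm_smul' _ _
      _ = c⁻¹ := by rw [hnorm, abs_of_nonneg (by positivity), mul_one]
  have hJΔ : J *ᵥ Δ = δ • u - r := by
    have := hN1
    rw [sub_eq_iff_eq_add] at this
    rw [this]; abel
  have hΔeq : Δ = δ • z - y := by
    have h0 : J *ᵥ (Δ - (δ • z - y)) = 0 := by
      rw [Matrix.mulVec_sub, Matrix.mulVec_sub, Matrix.mulVec_smul, hJz, hJy, hJΔ]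
      abel
    have := zmat_mulVec_inj J hJZ u hu hJupos _ h0
    exact sub_eq_zero.mp this
  have huu : u ⬝ᵥ u = 1 := by
    rw [dotProduct]
    rw [← hsum]
    exact Finset.sum_congr rfl fun i _ => (sq (u i)).symm
  have hud : u ⬝ᵥ Δ = 0 := by
    have := hN2
    rw [huu] at this
    simpa using this
  have hkey : δ * (u ⬝ᵥ z) = u ⬝ᵥ y := by
    have h0 : u ⬝ᵥ (δ • z - y) = 0 := by rw [← hΔeq]; exact hud
    rw [dotProduct_sub, dotProduct_smul, smul_eq_mul] at h0
    linarith
  have huz : 0 < u ⬝ᵥ z := by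
    have hzne : z ≠ 0 := by
      intro h
      rw [h, Matrix.mulVec_zero] at hJz
      exact absurd (hJz ▸ rfl : (0 : Fin n → ℝ) (Classical.arbitrary _) = u (Classical.arbitrary _))
        (by simpa using (hu (Classical.arbitrary _)).ne)
    obtain ⟨j, hj⟩ := Function.ne_iff.mp hzne
    have hzj : 0 < z j := (hz0 j).lt_of_ne (by simpa using (Ne.symm hj))
    rw [dotProduct]
    exact Finset.sum_pos' (fun i _ => mul_nonneg (hu i).le (hz0 i))
      ⟨j, Finset.mem_univ j, mul_pos (hu j) hzj⟩
  have huy : 0 ≤ u ⬝ᵥ y := Finset.sum_nonneg fun i _ => mul_nonneg (hu i).le (hy0 i)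
  have hδ : 0 ≤ δ := by
    by_contra hcon
    push_neg at hcon
    nlinarith
  have h1 : m * (∑ i, y i) ≤ u ⬝ᵥ y := by
    rw [dotProduct, Finset.mul_sum]
    exact Finset.sum_le_sum fun i _ => mul_le_mul_of_nonneg_right (hum i) (hy0 i)
  have h2 : enorm' y ≤ ∑ i, y i := enorm_le_sum y hy0
  have h3 : u ⬝ᵥ z ≤ enorm' z := by
    have := dot_le_enorm u z
    rw [hnorm, one_mul] at this
    exact le_trans (le_of_eq rfl) this
  have h4 : m * enorm' y ≤ δ * enorm' z := by
    calc m * enorm' y ≤ m * ∑ i, y i := mul_le_mul_of_nonneg_left h2 hm0.le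
      _ ≤ u ⬝ᵥ y := h1
      _ = δ * (u ⬝ᵥ z) := hkey.symm
      _ ≤ δ * enorm' z := mul_le_mul_of_nonneg_left h3 hδ
  have h5 : enorm' Δ ≤ δ * enorm' z + enorm' y := by
    rw [hΔeq, sub_eq_add_neg]
    calc enorm' (δ • z + -y) ≤ enorm' (δ • z) + enorm' (-y) := enorm_triangle _ _
      _ = δ * enorm' z + enorm' y := by
          rw [enorm_smul', enorm_neg', abs_of_nonneg hδ]
  have hez : 0 ≤ enorm' z := enorm_nonneg' z
  have hey : 0 ≤ enorm' y := enorm_nonneg' y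
  have h6 : enorm' Δ ≤ δ * c⁻¹ + δ * c⁻¹ / m := by
    have h7 : enorm' y ≤ δ * enorm' z / m := by
      rw [le_div_iff₀ hm0]; linarith [h4]
    have h8 : δ * enorm' z ≤ δ * c⁻¹ := mul_le_mul_of_nonneg_left henz hδ
    have h9 : δ * enorm' z / m ≤ δ * c⁻¹ / m := by gcongr
    linarith
  calc c * m / (m + 1) * enorm' Δ ≤ c * m / (m + 1) * (δ * c⁻¹ + δ * c⁻¹ / m) :=
        mul_le_mul_of_nonneg_left h6 (by positivity)
    _ = δ := by
        field_simp
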